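/- Let λ, μ ∈ ℝ with μ > 0 and 2μ + 3λ > 0, let Q(G) := (λ/2)(tr G)² + μ|sym G|² on 3×3 real matrices, and define Q₂(B) := inf_{d∈ℝ³} Q(ι(B) + sym(d⊗e₃)) for B ∈ ℝ^{2×2}_sym. Then for every A ∈ ℝ^{2×2}_sym, the infimum over M ∈ ℝ^{2×2}_sym of ∫_{−1/2}^{1/2} Q₂(t·A + M) dt is attained and equals (1/12)·( (μλ/(λ+2μ))(tr A)² + μ|A|² ). (Isotropic representation of the bending stiffness Q_el.) -/

import Mathlib

open MeasureTheory Matrix Filter Topology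

noncomputable section

/-- 2×2 real matrices. -/
abbrev M2 : Type := Matrix (Fin 2) (Fin 2) ℝ
/-- 3×3 real matrices. -/
abbrev M3 : Type := Matrix (Fin 3) (Fin 3) ℝ

/-- squared Frobenius norm of a 2×2 matrix -/
def frobSq2 (A : M2) : ℝ := ∑ i, ∑ j, (A i j) ^ 2

/-- squared Frobenius norm of a 3×3 matrix -/
def frobSq3 (A : M3) : ℝ := ∑ i, ∑ j, (A i j) ^ 2

/-- symmetric part of a matrix: `sym G = (G + Gᵀ)/2` -/
def symPart (G : M3) : M3 := (1 / 2 : ℝ) • (G + Gᵀ)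

/-- `ι A` : the 3×3 matrix with upper-left 2×2 block `A` and zeros elsewhere -/
def iota (A : M2) : M3 :=
  Matrix.of fun i j =>
    if hi : (i : ℕ) < 2 then (if hj : (j : ℕ) < 2 then A ⟨i, hi⟩ ⟨j, hj⟩ else 0) else 0

/-- `d ⊗ e₃` : the 3×3 matrix whose third column is `d` and whose other entries vanish -/
def tensorE3 (d : Fin 3 → ℝ) : M3 :=
  Matrix.of fun i j => if j = (2 : Fin 3) then d i else 0

lemma aux_trace (B : M2) (d : Fin 3 → ℝ) :
    Matrix.trace (iota B + symPart (tensorE3 d)) = Matrix.trace B + d 2 := by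
  simp [Matrix.trace, iota, symPart, tensorE3, Fin.sum_univ_succ, Matrix.diag]
  ring

lemma aux_frob (B : M2) (hB : B.IsSymm) (d : Fin 3 → ℝ) :
    frobSq3 (symPart (iota B + symPart (tensorE3 d))) =
      frobSq2 B + ((d 0)^2 + (d 1)^2)/2 + (d 2)^2 := by
  have h10 : B 1 0 = B 0 1 := hB.apply 0 1
  simp [frobSq3, frobSq2, iota, symPart, tensorE3, Fin.sum_univ_succ, Matrix.transpose_apply, h10]
  ring

lemma aux_sq_lb (lam mu t x : ℝ) (hmu : 0 < mu) (h2 : 0 < lam + 2*mu) :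
    mu*lam/(lam+2*mu) * t^2 ≤ lam/2*(t+x)^2 + mu*x^2 := by
  rw [div_mul_eq_mul_div, div_le_iff₀ h2]
  nlinarith [sq_nonneg (lam*t + (lam+2*mu)*x)]

open intervalIntegral in
lemma aux_int (a b c : ℝ) :
    ∫ t in Set.Ioo (-(1:ℝ)/2) (1/2), (a*t^2 + b*t + c) = a/12 + c := by
  rw [← MeasureTheory.integral_Ioc_eq_integral_Ioo,
    ← intervalIntegral.integral_of_le (by norm_num)]
  have h1 : IntervalIntegrable (fun t : ℝ => a*t^2) volume (-(1:ℝ)/2) (1/2) :=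
    (by continuity : Continuous fun t : ℝ => a*t^2).intervalIntegrable _ _
  have h2 : IntervalIntegrable (fun t : ℝ => b*t) volume (-(1:ℝ)/2) (1/2) :=
    (by continuity : Continuous fun t : ℝ => b*t).intervalIntegrable _ _
  have h3 : IntervalIntegrable (fun t : ℝ => c) volume (-(1:ℝ)/2) (1/2) :=
    intervalIntegrable_const
  rw [integral_add (h1.add h2) h3, integral_add h1 h2, intervalIntegral.integral_const_mul,
    intervalIntegral.integral_const_mul, integral_pow, integral_id, intervalIntegral.integral_const]
  norm_num; ring

theorem statement5 (lam mu : ℝ) (hmu : 0 < mu) (hbulk : 0 < 2 * mu + 3 * lam)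
    (Q : M3 → ℝ)
    (hQ : ∀ G, Q G = lam / 2 * (Matrix.trace G) ^ 2 + mu * frobSq3 (symPart G))
    (Q2 : M2 → ℝ)
    (hQ2 : ∀ B, Q2 B = ⨅ d : Fin 3 → ℝ, Q (iota B + symPart (tensorE3 d)))
    (A : M2) (hA : A.IsSymm) :
    IsLeast
      (Set.range fun M : {M : M2 // M.IsSymm} =>
        ∫ t in Set.Ioo (-(1 : ℝ) / 2) (1 / 2), Q2 (t • A + M.val))
      ((1 / 12) * (mu * lam / (lam + 2 * mu) * (Matrix.trace A) ^ 2 + mu * frobSq2 A)) := by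
  have h2 : 0 < lam + 2 * mu := by nlinarith
  set c : ℝ := mu * lam / (lam + 2 * mu) with hc
  -- closed form for Q2 on symmetric matrices
  have hQ2' : ∀ B : M2, B.IsSymm → Q2 B = c * (Matrix.trace B) ^ 2 + mu * frobSq2 B := by
    intro B hB
    rw [hQ2]
    have hval : ∀ d : Fin 3 → ℝ, Q (iota B + symPart (tensorE3 d)) =
        lam/2 * (Matrix.trace B + d 2)^2 +
          mu * (frobSq2 B + ((d 0)^2 + (d 1)^2)/2 + (d 2)^2) := by
      intro d
      rw [hQ, aux_trace, aux_frob B hB]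
    have hlb : ∀ d : Fin 3 → ℝ,
        c * (Matrix.trace B) ^ 2 + mu * frobSq2 B ≤ Q (iota B + symPart (tensorE3 d)) := by
      intro d
      rw [hval]
      have := aux_sq_lb lam mu (Matrix.trace B) (d 2) hmu h2
      nlinarith [sq_nonneg (d 0), sq_nonneg (d 1)]
    refine le_antisymm ?_ (le_ciInf hlb)
    have := ciInf_le (f := fun d : Fin 3 → ℝ => Q (iota B + symPart (tensorE3 d)))
      ⟨_, by rintro x ⟨d, rfl⟩; exact hlb d⟩ ![0, 0, -lam * Matrix.trace B / (lam + 2*mu)]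
    refine le_trans this (le_of_eq ?_)
    rw [hval]
    simp only [Matrix.cons_val_zero, Matrix.cons_val_one, Matrix.head_cons]
    rw [show (![0, 0, -lam * Matrix.trace B / (lam + 2*mu)] : Fin 3 → ℝ) 2
      = -lam * Matrix.trace B / (lam + 2*mu) from rfl]
    have : lam/2 * (Matrix.trace B + -lam * Matrix.trace B / (lam + 2*mu))^2
        + mu * (-lam * Matrix.trace B / (lam + 2*mu))^2 = c * (Matrix.trace B)^2 := by
      rw [hc]; field_simp; ring
    linarith [this]
  -- quadratic-in-t expansion of the integrand
  have key : ∀ (M : M2), M.IsSymm → ∀ t : ℝ, Q2 (t • A + M) =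
      (c * (Matrix.trace A)^2 + mu * frobSq2 A) * t^2 +
      (2*c*(Matrix.trace A)*(Matrix.trace M) + 2*mu*(∑ i, ∑ j, A i j * M i j)) * t +
      (c * (Matrix.trace M)^2 + mu * frobSq2 M) := by
    intro M hM t
    have hsymm : (t • A + M).IsSymm := by
      rw [Matrix.IsSymm, Matrix.transpose_add, Matrix.transpose_smul, hA, hM]
    rw [hQ2' _ hsymm]
    have htr : Matrix.trace (t • A + M) = t * Matrix.trace A + Matrix.trace M := by
      simp [Matrix.trace_add, Matrix.trace_smul, smul_eq_mul]
    have hfr : frobSq2 (t • A + M) = t^2 * frobSq2 A + 2*t*(∑ i, ∑ j, A i j * M i j)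
        + frobSq2 M := by
      simp [frobSq2, Matrix.add_apply, Matrix.smul_apply, smul_eq_mul, Fin.sum_univ_succ]
      ring
    rw [htr, hfr]; ring
  -- value of the integral
  have hint : ∀ (M : M2), M.IsSymm →
      (∫ t in Set.Ioo (-(1 : ℝ) / 2) (1 / 2), Q2 (t • A + M)) =
      (c * (Matrix.trace A)^2 + mu * frobSq2 A) / 12 +
      (c * (Matrix.trace M)^2 + mu * frobSq2 M) := by
    intro M hM
    rw [← aux_int (c * (Matrix.trace A)^2 + mu * frobSq2 A)
      (2*c*(Matrix.trace A)*(Matrix.trace M) + 2*mu*(∑ i, ∑ j, A i j * M i j))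
      (c * (Matrix.trace M)^2 + mu * frobSq2 M)]
    exact setIntegral_congr_fun measurableSet_Ioo (fun t _ => key M hM t)
  -- nonnegativity of the quadratic form
  have hpos : ∀ (M : M2), M.IsSymm → 0 ≤ c * (Matrix.trace M)^2 + mu * frobSq2 M := by
    intro M hM
    have htr2 : (Matrix.trace M)^2 ≤ 2 * frobSq2 M := by
      simp only [Matrix.trace, frobSq2, Fin.sum_univ_succ, Matrix.diag]
      simp
      nlinarith [sq_nonneg (M 0 0 - M 1 1), sq_nonneg (M 0 1), sq_nonneg (M 1 0)]
    have hcmu : 0 ≤ c + mu / 2 := by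
      rw [hc]
      have : c + mu/2 = mu * (3*lam + 2*mu) / (2*(lam + 2*mu)) := by
        rw [hc]; rw [div_add_div _ _ h2.ne' two_ne_zero,
          div_eq_div_iff (mul_pos h2 two_pos).ne' (mul_pos two_pos h2).ne']; ring
      rw [← hc, this]
      exact div_nonneg (by nlinarith) (by nlinarith)
    nlinarith
  constructor
  · refine ⟨⟨0, by simp [Matrix.IsSymm]⟩, ?_⟩
    show (∫ t in Set.Ioo (-(1 : ℝ) / 2) (1 / 2), Q2 (t • A + (0 : M2))) = _
    rw [hint 0 (by simp [Matrix.IsSymm])]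
    simp [frobSq2]
    ring
  · rintro x ⟨⟨M, hM⟩, rfl⟩
    simp only
    rw [hint M hM]
    have := hpos M hM
    linarith
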